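/- arXiv:1308.1299 — 5 statements merged into one kernel-verified Lean document; each statement's English description precedes it below -/
import Mathlib

section
/- Let Δ be a simplicial complex on [n]. If 𝒞 = C_1 ⊔ ⋯ ⊔ C_k is a nested colouring of Δ, then 𝒞 is a nested colouring of the underlying graph G_Δ, and the converse holds when Δ is a flag complex. In particular, the nested chromatic number satisfies χ_N(Δ) ≥ χ_N(G_Δ), with equality when Δ is flag. -/
open MvPolynomial

/-- A simplicial complex on a vertex type `V`: a collection of finite subsets (faces)
containing the empty set and closed under taking subsets. -/
structure SimpComplex (V : Type) where
  faces : Set (Finset V)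
  empty_mem : ∅ ∈ faces
  down_closed : ∀ {σ τ : Finset V}, σ ∈ faces → τ ⊆ σ → τ ∈ faces

namespace SimpComplex

variable {V : Type}

/-- `A` is an independent set of `Δ`: no two distinct members lie in a common face. -/
def IsIndep (Δ : SimpComplex V) (A : Set V) : Prop :=
  ∀ u ∈ A, ∀ v ∈ A, u ≠ v → ∀ σ ∈ Δ.faces, ¬(u ∈ σ ∧ v ∈ σ)

/-- The link of a vertex `v` in `Δ`. -/
def link [DecidableEq V] (Δ : SimpComplex V) (v : V) : Set (Finset V) :=
  {τ | τ ∈ Δ.faces ∧ v ∉ τ ∧ insert v τ ∈ Δ.faces}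

end SimpComplex

/-- A family of finsets indexed by `Fin k` is a partition of the vertex set. -/
def IsPartition {V : Type} {k : ℕ} (C : Fin k → Finset V) : Prop :=
  ∀ v : V, ∃! i, v ∈ C i

/-- A proper vertex `k`-colouring of a simplicial complex: a partition into independent sets. -/
def IsProperColouring {V : Type} {k : ℕ} (Δ : SimpComplex V) (C : Fin k → Finset V) : Prop :=
  IsPartition C ∧ ∀ i, Δ.IsIndep (C i : Set V)

/-- The underlying graph (1-skeleton) of a simplicial complex. -/
def SimpComplex.underlyingGraph {V : Type} [DecidableEq V] (Δ : SimpComplex V) :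
    SimpleGraph V where
  Adj u v := u ≠ v ∧ ({u, v} : Finset V) ∈ Δ.faces
  symm := by
    constructor
    intro u v h
    exact ⟨h.1.symm, by rw [Finset.pair_comm]; exact h.2⟩
  loopless := by
    constructor
    intro v h
    exact h.1 rfl

/-- `A` is an independent set of the graph `G`: it contains no edge. -/
def GraphIndep {V : Type} (G : SimpleGraph V) (A : Set V) : Prop :=
  ∀ u ∈ A, ∀ v ∈ A, ¬ G.Adj u v

/-- `A` is a nested independent set of `Δ`: it is independent and its members can be
linearly ordered so that earlier vertices have larger links. -/
def IsNestedSet {V : Type} [DecidableEq V] (Δ : SimpComplex V) (A : Set V) : Prop :=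
  Δ.IsIndep A ∧ ∃ l : List V, l.Nodup ∧ (∀ v, v ∈ l ↔ v ∈ A) ∧
    l.Pairwise (fun v u => Δ.link u ⊆ Δ.link v)

/-- `A` is a nested independent set of the graph `G`: it is independent and its members
can be linearly ordered so that earlier vertices have larger neighbourhoods. -/
def IsGraphNestedSet {V : Type} (G : SimpleGraph V) (A : Set V) : Prop :=
  GraphIndep G A ∧ ∃ l : List V, l.Nodup ∧ (∀ v, v ∈ l ↔ v ∈ A) ∧
    l.Pairwise (fun v u => G.neighborSet u ⊆ G.neighborSet v)

/-- The nested chromatic number of a simplicial complex. -/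
noncomputable def SimpComplex.nestedChromaticNumber {n : ℕ} (Δ : SimpComplex (Fin n)) : ℕ :=
  sInf {k | ∃ C : Fin k → Finset (Fin n), IsPartition C ∧
    ∀ i, IsNestedSet Δ (C i : Set (Fin n))}

/-- The nested chromatic number of a graph. -/
noncomputable def graphNestedChromaticNumber {n : ℕ} (G : SimpleGraph (Fin n)) : ℕ :=
  sInf {k | ∃ C : Fin k → Finset (Fin n), IsPartition C ∧
    ∀ i, IsGraphNestedSet G (C i : Set (Fin n))}

/-- `Δ` is a flag complex: its faces are exactly the cliques of its underlying graph. -/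
def SimpComplex.IsFlag {V : Type} [DecidableEq V] (Δ : SimpComplex V) : Prop :=
  ∀ σ : Finset V, σ ∈ Δ.faces ↔ Δ.underlyingGraph.IsClique (σ : Set V)

lemma indep_to_graph {n : ℕ} (Δ : SimpComplex (Fin n)) {A : Set (Fin n)}
    (h : Δ.IsIndep A) : GraphIndep Δ.underlyingGraph A := by
  intro u hu v hv hadj
  exact h u hu v hv hadj.1 {u, v} hadj.2 ⟨by simp, by simp⟩

lemma graph_indep_to_indep {n : ℕ} (Δ : SimpComplex (Fin n)) (hflag : Δ.IsFlag)
    {A : Set (Fin n)} (h : GraphIndep Δ.underlyingGraph A) : Δ.IsIndep A := by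
  intro u hu v hv huv σ hσ ⟨huσ, hvσ⟩
  exact h u hu v hv ((hflag σ).1 hσ huσ hvσ huv)

lemma link_sub_nbr {n : ℕ} (Δ : SimpComplex (Fin n)) {u v : Fin n}
    (h : Δ.link u ⊆ Δ.link v) :
    Δ.underlyingGraph.neighborSet u ⊆ Δ.underlyingGraph.neighborSet v := by
  intro w hw
  obtain ⟨hne, hf⟩ := hw
  have h1 : ({w} : Finset (Fin n)) ∈ Δ.link u := by
    refine ⟨Δ.down_closed hf (by intro x hx; simp at hx; simp [hx]), by simp [hne], ?_⟩
    · show insert u {w} ∈ Δ.faces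
      exact hf
  obtain ⟨_, hv, hins⟩ := h h1
  simp only [Finset.mem_singleton] at hv
  exact ⟨hv, hins⟩

lemma nbr_sub_link {n : ℕ} (Δ : SimpComplex (Fin n)) (hflag : Δ.IsFlag) {u v : Fin n}
    (h : Δ.underlyingGraph.neighborSet u ⊆ Δ.underlyingGraph.neighborSet v) :
    Δ.link u ⊆ Δ.link v := by
  rintro τ ⟨hτ, huτ, hiu⟩
  have hcu : Δ.underlyingGraph.IsClique (↑(insert u τ) : Set (Fin n)) := (hflag _).1 hiu
  have hadj : ∀ w ∈ τ, Δ.underlyingGraph.Adj v w := by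
    intro w hw
    have huw : u ≠ w := fun e => huτ (e ▸ hw)
    have : Δ.underlyingGraph.Adj u w :=
      hcu (by simp) (by simp [hw]) huw
    exact h this
  have hvτ : v ∉ τ := fun hv => Δ.underlyingGraph.loopless.irrefl v (hadj v hv)
  refine ⟨hτ, hvτ, (hflag _).2 ?_⟩
  intro x hx y hy hxy
  simp only [Finset.coe_insert, Set.mem_insert_iff, Finset.mem_coe] at hx hy
  rcases hx with rfl | hx
  · rcases hy with rfl | hy
    · exact absurd rfl hxy
    · exact hadj y hy
  · rcases hy with rfl | hy
    · exact (hadj x hx).symm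
    · exact (hflag τ).1 hτ hx hy hxy

lemma nested_to_graph {n : ℕ} (Δ : SimpComplex (Fin n)) {A : Set (Fin n)}
    (h : IsNestedSet Δ A) : IsGraphNestedSet Δ.underlyingGraph A := by
  obtain ⟨hi, l, hnd, hmem, hp⟩ := h
  exact ⟨indep_to_graph Δ hi, l, hnd, hmem, hp.imp fun hs => link_sub_nbr Δ hs⟩

lemma graph_nested_to_nested {n : ℕ} (Δ : SimpComplex (Fin n)) (hflag : Δ.IsFlag)
    {A : Set (Fin n)} (h : IsGraphNestedSet Δ.underlyingGraph A) : IsNestedSet Δ A := by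
  obtain ⟨hi, l, hnd, hmem, hp⟩ := h
  exact ⟨graph_indep_to_indep Δ hflag hi, l, hnd, hmem,
    hp.imp fun hs => nbr_sub_link Δ hflag hs⟩

lemma nested_set_nonempty {n : ℕ} (Δ : SimpComplex (Fin n)) :
    (n : ℕ) ∈ {k | ∃ C : Fin k → Finset (Fin n), IsPartition C ∧
      ∀ i, IsNestedSet Δ (C i : Set (Fin n))} := by
  refine ⟨fun i => {i}, fun v => ⟨v, by simp, fun i hi => by simp_all⟩, fun i => ?_⟩
  refine ⟨?_, [i], by simp, by simp, by simp⟩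
  intro u hu v hv huv
  simp only [Finset.coe_singleton, Set.mem_singleton_iff] at hu hv
  exact absurd (hu.trans hv.symm) huv

/-- Lemma 3.4: every nested colouring of `Δ` is a nested colouring of the
underlying graph `G_Δ`, the converse holds when `Δ` is flag, and consequently
`χ_N(Δ) ≥ χ_N(G_Δ)` with equality when `Δ` is flag. -/
theorem stmt2 {n : ℕ} (Δ : SimpComplex (Fin n)) :
    (∀ (k : ℕ) (C : Fin k → Finset (Fin n)), IsPartition C →
      (∀ i, IsNestedSet Δ (C i : Set (Fin n))) →
      (∀ i, IsGraphNestedSet Δ.underlyingGraph (C i : Set (Fin n)))) ∧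
    (Δ.IsFlag → ∀ (k : ℕ) (C : Fin k → Finset (Fin n)), IsPartition C →
      (∀ i, IsGraphNestedSet Δ.underlyingGraph (C i : Set (Fin n))) →
      (∀ i, IsNestedSet Δ (C i : Set (Fin n)))) ∧
    graphNestedChromaticNumber Δ.underlyingGraph ≤ Δ.nestedChromaticNumber ∧
    (Δ.IsFlag → Δ.nestedChromaticNumber = graphNestedChromaticNumber Δ.underlyingGraph) := by
  have h1 : ∀ (k : ℕ) (C : Fin k → Finset (Fin n)), IsPartition C →
      (∀ i, IsNestedSet Δ (C i : Set (Fin n))) →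
      (∀ i, IsGraphNestedSet Δ.underlyingGraph (C i : Set (Fin n))) :=
    fun k C _ h i => nested_to_graph Δ (h i)
  have h2 : Δ.IsFlag → ∀ (k : ℕ) (C : Fin k → Finset (Fin n)), IsPartition C →
      (∀ i, IsGraphNestedSet Δ.underlyingGraph (C i : Set (Fin n))) →
      (∀ i, IsNestedSet Δ (C i : Set (Fin n))) :=
    fun hf k C _ h i => graph_nested_to_nested Δ hf (h i)
  have hsub : {k | ∃ C : Fin k → Finset (Fin n), IsPartition C ∧
      ∀ i, IsNestedSet Δ (C i : Set (Fin n))} ⊆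
      {k | ∃ C : Fin k → Finset (Fin n), IsPartition C ∧
      ∀ i, IsGraphNestedSet Δ.underlyingGraph (C i : Set (Fin n))} := by
    rintro k ⟨C, hP, hN⟩
    exact ⟨C, hP, h1 k C hP hN⟩
  have hle : graphNestedChromaticNumber Δ.underlyingGraph ≤ Δ.nestedChromaticNumber := by
    apply Nat.sInf_le
    exact hsub (Nat.sInf_mem ⟨n, nested_set_nonempty Δ⟩)
  refine ⟨h1, h2, hle, fun hf => ?_⟩
  have heq : {k | ∃ C : Fin k → Finset (Fin n), IsPartition C ∧
      ∀ i, IsNestedSet Δ (C i : Set (Fin n))} =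
      {k | ∃ C : Fin k → Finset (Fin n), IsPartition C ∧
      ∀ i, IsGraphNestedSet Δ.underlyingGraph (C i : Set (Fin n))} := by
    apply Set.Subset.antisymm hsub
    rintro k ⟨C, hP, hN⟩
    exact ⟨C, hP, h2 hf k C hP hN⟩
  unfold SimpComplex.nestedChromaticNumber graphNestedChromaticNumber
  rw [heq]
end

section
/- Let Δ be a simplicial complex on [n] and let 𝒞 = C_1 ⊔ ⋯ ⊔ C_k be a nested colouring of Δ. If 𝒞′ and 𝒞″ are copies of 𝒞 endowed with (possibly distinct) nesting orders on the colour classes, then the uniform face ideals coincide: I(Δ, 𝒞′) = I(Δ, 𝒞″). -/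
open MvPolynomial

/-- An ordered proper vertex `k`-colouring, given by a duplicate-free list (recording the
linear order) for each colour class; the classes partition the vertices and are independent. -/
def IsOrderedColouring {V : Type} {k : ℕ} (Δ : SimpComplex V) (C : Fin k → List V) : Prop :=
  (∀ i, (C i).Nodup) ∧ (∀ v : V, ∃! i, v ∈ C i) ∧ (∀ i, Δ.IsIndep {v | v ∈ C i})

/-- The given linear orders on the colour classes are nesting orders: within a class,
if `v` comes before `u` then `link(u) ⊆ link(v)`.  (Thus the colouring is nested and is
endowed with the nesting order.) -/
def IsNestingOrdered {V : Type} [DecidableEq V] {k : ℕ} (Δ : SimpComplex V)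
    (C : Fin k → List V) : Prop :=
  ∀ i, (C i).Pairwise (fun v u => Δ.link u ⊆ Δ.link v)

/-- The index vector of a set `σ` with respect to the ordered colouring `C`:
`eVec C σ i = j` iff the (unique) element of `σ ∩ C i` is the `j`-th element of the list
`C i` (counting from 1), and `0` if `σ ∩ C i = ∅`. -/
def eVec {V : Type} [DecidableEq V] {k : ℕ} (C : Fin k → List V) (σ : Finset V)
    (i : Fin k) : ℕ :=
  if (C i).any (fun v => decide (v ∈ σ)) then
    (C i).findIdx (fun v => decide (v ∈ σ)) + 1
  else 0

/-- The uniform monomial of a face `σ`:  `∏ i, x_i ^ (#C_i - e_i(σ)) * y_i ^ (e_i(σ))`,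
where `x_i = X (Sum.inl i)` and `y_i = X (Sum.inr i)`. -/
noncomputable def uniformMonomial (K : Type) [Field K] {V : Type} [DecidableEq V] {k : ℕ}
    (C : Fin k → List V) (σ : Finset V) : MvPolynomial (Fin k ⊕ Fin k) K :=
  ∏ i : Fin k, (X (Sum.inl i) ^ ((C i).length - eVec C σ i) * X (Sum.inr i) ^ eVec C σ i)

/-- The uniform face ideal of `Δ` with respect to the ordered colouring `C`. -/
noncomputable def uniformFaceIdeal (K : Type) [Field K] {V : Type} [DecidableEq V] {k : ℕ}
    (Δ : SimpComplex V) (C : Fin k → List V) : Ideal (MvPolynomial (Fin k ⊕ Fin k) K) :=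
  Ideal.span {m | ∃ σ ∈ Δ.faces, m = uniformMonomial K C σ}

section Helpers

variable {V : Type} [DecidableEq V]

private lemma findIdx_congr {α : Type*} {p q : α → Bool} :
    ∀ l : List α, (∀ x ∈ l, p x = q x) → l.findIdx p = l.findIdx q := by
  intro l
  induction l with
  | nil => intro _; rfl
  | cons a l ih =>
    intro h
    simp only [List.findIdx_cons, h a (by simp)]
    cases q a <;> simp [ih (fun x hx => h x (by simp [hx]))]

private lemma any_congr {α : Type*} {p q : α → Bool} :
    ∀ l : List α, (∀ x ∈ l, p x = q x) → l.any p = l.any q := by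
  intro l
  induction l with
  | nil => intro _; rfl
  | cons a l ih =>
    intro h
    simp only [List.any_cons, h a (by simp), ih (fun x hx => h x (by simp [hx]))]

private lemma eVec_congr {k : ℕ} (C : Fin k → List V) (σ σ' : Finset V) (i : Fin k)
    (h : ∀ v ∈ C i, (v ∈ σ ↔ v ∈ σ')) : eVec C σ i = eVec C σ' i := by
  have hpq : ∀ x ∈ C i, (fun v => decide (v ∈ σ)) x = (fun v => decide (v ∈ σ')) x := by
    intro x hx; simpa using h x hx
  have hany : (C i).any (fun v => decide (v ∈ σ)) = (C i).any (fun v => decide (v ∈ σ')) :=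
    any_congr _ hpq
  unfold eVec
  rw [hany, findIdx_congr _ hpq]

private lemma link_pos (Δ : SimpComplex V) {a b : List V}
    (ha : a.Nodup) (hb : b.Nodup) (hmem : ∀ v, v ∈ a ↔ v ∈ b)
    (hpa : a.Pairwise (fun v u => Δ.link u ⊆ Δ.link v))
    (hpb : b.Pairwise (fun v u => Δ.link u ⊆ Δ.link v))
    {j : ℕ} (hja : j < a.length) (hjb : j < b.length) :
    Δ.link (a[j]) ⊆ Δ.link (b[j]) := by
  -- pigeonhole: some element among the first j+1 of a has index ≥ j in b
  have hpigeon : ∃ w ∈ a.take (j + 1), j ≤ b.idxOf w := by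
    by_contra hcon
    push_neg at hcon
    have hsub : ∀ w ∈ (a.take (j + 1)).toFinset, b.idxOf w ∈ Finset.range j := by
      intro w hw
      simp only [List.mem_toFinset] at hw
      exact Finset.mem_range.mpr (hcon w hw)
    have hinj : Set.InjOn (fun w => b.idxOf w) ↑(a.take (j + 1)).toFinset := by
      intro w₁ hw₁ w₂ hw₂ he
      have hw₁b : w₁ ∈ b := (hmem w₁).1 (List.mem_of_mem_take (by simpa using hw₁))
      have hw₂b : w₂ ∈ b := (hmem w₂).1 (List.mem_of_mem_take (by simpa using hw₂))
      exact (List.idxOf_inj hw₁b).1 he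
    have hcard := Finset.card_le_card_of_injOn _ hsub hinj
    rw [List.toFinset_card_of_nodup (ha.sublist (List.take_sublist _ _)),
      Finset.card_range, List.length_take] at hcard
    omega
  obtain ⟨w, hwt, hwb⟩ := hpigeon
  have hwa : w ∈ a := List.mem_of_mem_take hwt
  have hwbm : w ∈ b := (hmem w).1 hwa
  -- index of w in a is ≤ j
  obtain ⟨m, hm, hma⟩ := List.getElem_of_mem hwt
  have hmlen : m < a.length := by
    rw [List.length_take] at hm; omega
  have hmj : m ≤ j := by rw [List.length_take] at hm; omega
  have hwam : a[m] = w := by rw [← hma]; exact List.getElem_take.symm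
  -- link (a[j]) ⊆ link w
  have h1 : Δ.link (a[j]) ⊆ Δ.link w := by
    rcases eq_or_lt_of_le hmj with he | hlt
    · subst he; rw [hwam]
    · rw [← hwam]
      exact List.pairwise_iff_getElem.1 hpa m j hmlen hja hlt
  -- link w ⊆ link (b[j])
  have hbl : b.idxOf w < b.length := List.idxOf_lt_length_iff.2 hwbm
  have hwbg : b[b.idxOf w] = w := List.getElem_idxOf hbl
  have h2 : Δ.link w ⊆ Δ.link (b[j]) := by
    rcases eq_or_lt_of_le hwb with he | hlt
    · rw [← hwbg]; subst he; rfl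
    · rw [← hwbg]
      exact List.pairwise_iff_getElem.1 hpb j _ hjb hbl hlt
  exact h1.trans h2

private lemma face_swap (Δ : SimpComplex V) {σ : Finset V} (hσ : σ ∈ Δ.faces) {v u : V}
    (hv : v ∈ σ) (hlink : Δ.link v ⊆ Δ.link u) :
    insert u (σ.erase v) ∈ Δ.faces := by
  have hτ : σ.erase v ∈ Δ.link v := by
    refine ⟨Δ.down_closed hσ (Finset.erase_subset _ _), Finset.notMem_erase _ _, ?_⟩
    rw [Finset.insert_erase hv]; exact hσ
  exact (hlink hτ).2.2

end Helpers

private lemma key_lemma {n k : ℕ} (Δ : SimpComplex (Fin n))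
    (C : Fin k → Finset (Fin n)) (hC : IsProperColouring Δ C)
    (l₁ l₂ : Fin k → List (Fin n))
    (h₁ : ∀ i, (l₁ i).Nodup ∧ ∀ v, v ∈ l₁ i ↔ v ∈ C i)
    (h₂ : ∀ i, (l₂ i).Nodup ∧ ∀ v, v ∈ l₂ i ↔ v ∈ C i)
    (hn₁ : IsNestingOrdered Δ l₁) (hn₂ : IsNestingOrdered Δ l₂)
    (σ : Finset (Fin n)) (hσ : σ ∈ Δ.faces) (m : ℕ) :
    ∃ σ' ∈ Δ.faces, (∀ i : Fin k, (i : ℕ) < m → eVec l₂ σ' i = eVec l₁ σ i) ∧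
      (∀ i : Fin k, m ≤ (i : ℕ) → eVec l₁ σ' i = eVec l₁ σ i) := by
  induction m with
  | zero => exact ⟨σ, hσ, fun i hi => absurd hi (by omega), fun i _ => rfl⟩
  | succ m ih =>
    obtain ⟨σ', hface, hlt, hge⟩ := ih
    by_cases hk : k ≤ m
    · exact ⟨σ', hface, fun i _ => hlt i (lt_of_lt_of_le i.isLt hk),
        fun i hi => hge i (le_trans (Nat.le_succ m) hi)⟩
    push_neg at hk
    set i₀ : Fin k := ⟨m, hk⟩ with hi₀def
    by_cases h : (l₁ i₀).any (fun v => decide (v ∈ σ')) = true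
    · -- there is a vertex of colour i₀ in σ'
      have hex : ∃ x ∈ l₁ i₀, (fun v => decide (v ∈ σ')) x = true := by
        simpa [List.any_eq_true] using h
      set p : Fin n → Bool := fun v => decide (v ∈ σ') with hp
      set j : ℕ := (l₁ i₀).findIdx p with hj
      have hj₁ : j < (l₁ i₀).length := List.findIdx_lt_length_of_exists hex
      set v : Fin n := (l₁ i₀)[j] with hv
      have hvσ : v ∈ σ' := by
        have := @List.findIdx_getElem _ p (l₁ i₀) hj₁
        simpa [hp] using this
      have hmemiff : ∀ w, w ∈ l₁ i₀ ↔ w ∈ l₂ i₀ :=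
        fun w => ((h₁ i₀).2 w).trans ((h₂ i₀).2 w).symm
      have hlen : (l₁ i₀).length = (l₂ i₀).length :=
        (((List.perm_ext_iff_of_nodup (h₁ i₀).1 (h₂ i₀).1).2 hmemiff)).length_eq
      have hj₂ : j < (l₂ i₀).length := hlen ▸ hj₁
      set u : Fin n := (l₂ i₀)[j] with hu
      have hlink : Δ.link v ⊆ Δ.link u :=
        link_pos Δ (h₁ i₀).1 (h₂ i₀).1 hmemiff (hn₁ i₀) (hn₂ i₀) hj₁ hj₂
      have hface'' : insert u (σ'.erase v) ∈ Δ.faces := face_swap Δ hface hvσ hlink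
      set σ'' : Finset (Fin n) := insert u (σ'.erase v) with hσ''
      have hvC : v ∈ C i₀ := (h₁ i₀).2 v |>.1 (List.getElem_mem hj₁)
      have huC : u ∈ C i₀ := (h₂ i₀).2 u |>.1 (List.getElem_mem hj₂)
      -- membership in σ'' vs σ' for vertices of other colours
      have hothermem : ∀ (i : Fin k), i ≠ i₀ → ∀ w ∈ C i, (w ∈ σ'' ↔ w ∈ σ') := by
        intro i hi w hw
        have hwu : w ≠ u := by
          intro he
          obtain ⟨i', -, huniq⟩ := hC.1 w
          exact hi ((huniq i hw).trans (huniq i₀ (he.symm ▸ huC)).symm)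
        have hwv : w ≠ v := by
          intro he
          obtain ⟨i', -, huniq⟩ := hC.1 w
          exact hi ((huniq i hw).trans (huniq i₀ (he.symm ▸ hvC)).symm)
        simp [hσ'', Finset.mem_insert, Finset.mem_erase, hwu, hwv]
      have hother₂ : ∀ (i : Fin k), i ≠ i₀ → eVec l₂ σ'' i = eVec l₂ σ' i := by
        intro i hi
        exact eVec_congr l₂ σ'' σ' i (fun w hw => hothermem i hi w ((h₂ i).2 w |>.1 hw))
      have hother₁ : ∀ (i : Fin k), i ≠ i₀ → eVec l₁ σ'' i = eVec l₁ σ' i := by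
        intro i hi
        exact eVec_congr l₁ σ'' σ' i (fun w hw => hothermem i hi w ((h₁ i).2 w |>.1 hw))
      -- value at colour i₀
      have hval₁ : eVec l₁ σ' i₀ = j + 1 := by
        unfold eVec; rw [if_pos h]
      have huσ'' : u ∈ σ'' := Finset.mem_insert_self _ _
      have hval₂ : eVec l₂ σ'' i₀ = j + 1 := by
        have hany : (l₂ i₀).any (fun w => decide (w ∈ σ'')) = true := by
          simp only [List.any_eq_true]
          exact ⟨u, List.getElem_mem hj₂, by simpa using huσ''⟩
        have hfind : (l₂ i₀).findIdx (fun w => decide (w ∈ σ'')) = j := by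
          rw [List.findIdx_eq hj₂]
          refine ⟨by simpa using huσ'', ?_⟩
          intro j' hj'
          simp only [decide_eq_false_iff_not]
          intro hwmem
          set w : Fin n := (l₂ i₀)[j']'(lt_trans hj' hj₂) with hw
          have hwne : w ≠ u := by
            intro he
            have := ((h₂ i₀).1.getElem_inj_iff).1 he
            omega
          rcases Finset.mem_insert.1 hwmem with he | hmem
          · exact hwne he
          · have hwσ' : w ∈ σ' := Finset.mem_of_mem_erase hmem
            have hwnv : w ≠ v := Finset.ne_of_mem_erase hmem
            have hwC : w ∈ C i₀ := (h₂ i₀).2 w |>.1 (List.getElem_mem _)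
            exact hC.2 i₀ w hwC v hvC hwnv σ' hface ⟨hwσ', hvσ⟩
        unfold eVec
        rw [if_pos hany, hfind]
      refine ⟨σ'', hface'', ?_, ?_⟩
      · intro i hi
        rcases lt_or_eq_of_le (Nat.lt_succ_iff.1 hi) with hlt' | heq
        · have hne : i ≠ i₀ := by
            intro he; rw [he] at hlt'; simp [hi₀def] at hlt'
          rw [hother₂ i hne]; exact hlt i hlt'
        · have hii : i = i₀ := Fin.ext heq
          rw [hii, hval₂, ← hval₁]
          exact hge i₀ (le_refl m)
      · intro i hi
        have hne : i ≠ i₀ := by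
          intro he; rw [he] at hi; simp [hi₀def] at hi
        rw [hother₁ i hne]
        exact hge i (by omega)
    · -- no vertex of colour i₀ in σ'
      have hany₂ : ¬((l₂ i₀).any (fun w => decide (w ∈ σ')) = true) := by
        intro hc
        apply h
        simp only [List.any_eq_true] at hc ⊢
        obtain ⟨x, hx, hpx⟩ := hc
        exact ⟨x, (((h₁ i₀).2 x).2 (((h₂ i₀).2 x).1 hx)), hpx⟩
      refine ⟨σ', hface, ?_, fun i hi => hge i (by omega)⟩
      intro i hi
      rcases lt_or_eq_of_le (Nat.lt_succ_iff.1 hi) with hlt' | heq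
      · exact hlt i hlt'
      · have hii : i = i₀ := Fin.ext heq
        have e₁ : eVec l₁ σ' i₀ = 0 := by unfold eVec; rw [if_neg h]
        have e₂ : eVec l₂ σ' i₀ = 0 := by unfold eVec; rw [if_neg hany₂]
        rw [hii, e₂, ← (hge i₀ (le_refl m)), e₁]

private lemma ideal_le {n k : ℕ} (K : Type) [Field K] (Δ : SimpComplex (Fin n))
    (C : Fin k → Finset (Fin n)) (hC : IsProperColouring Δ C)
    (l₁ l₂ : Fin k → List (Fin n))
    (h₁ : ∀ i, (l₁ i).Nodup ∧ ∀ v, v ∈ l₁ i ↔ v ∈ C i)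
    (h₂ : ∀ i, (l₂ i).Nodup ∧ ∀ v, v ∈ l₂ i ↔ v ∈ C i)
    (hn₁ : IsNestingOrdered Δ l₁) (hn₂ : IsNestingOrdered Δ l₂) :
    uniformFaceIdeal K Δ l₁ ≤ uniformFaceIdeal K Δ l₂ := by
  unfold uniformFaceIdeal
  rw [Ideal.span_le]
  rintro x ⟨σ, hσ, rfl⟩
  obtain ⟨σ', hσ', he, -⟩ := key_lemma Δ C hC l₁ l₂ h₁ h₂ hn₁ hn₂ σ hσ k
  have heq : uniformMonomial K l₁ σ = uniformMonomial K l₂ σ' := by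
    unfold uniformMonomial
    apply Finset.prod_congr rfl
    intro i _
    have hlen : (l₁ i).length = (l₂ i).length :=
      ((List.perm_ext_iff_of_nodup (h₁ i).1 (h₂ i).1).2
        (fun w => ((h₁ i).2 w).trans ((h₂ i).2 w).symm)).length_eq
    rw [he i i.isLt, hlen]
  rw [heq]
  exact Ideal.subset_span ⟨σ', hσ', rfl⟩

/-- Lemma 4.4: if `𝒞` is a nested colouring of `Δ` and `l₁`, `l₂` are two
(possibly distinct) nesting orders on the colour classes of `𝒞`, then the resulting uniform
face ideals coincide. -/
theorem stmt3 {n k : ℕ} (K : Type) [Field K] (Δ : SimpComplex (Fin n))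
    (C : Fin k → Finset (Fin n)) (hC : IsProperColouring Δ C)
    (hnested : ∀ i, IsNestedSet Δ (C i : Set (Fin n)))
    (l₁ l₂ : Fin k → List (Fin n))
    (h₁ : ∀ i, (l₁ i).Nodup ∧ ∀ v, v ∈ l₁ i ↔ v ∈ C i)
    (h₂ : ∀ i, (l₂ i).Nodup ∧ ∀ v, v ∈ l₂ i ↔ v ∈ C i)
    (hn₁ : IsNestingOrdered Δ l₁) (hn₂ : IsNestingOrdered Δ l₂) :
    uniformFaceIdeal K Δ l₁ = uniformFaceIdeal K Δ l₂ :=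
  le_antisymm (ideal_le K Δ C hC l₁ l₂ h₁ h₂ hn₁ hn₂)
    (ideal_le K Δ C hC l₂ l₁ h₂ h₁ hn₂ hn₁)
end

section
/- Let Δ and Γ be simplicial complexes. If 𝒞 = C_1 ⊔ ⋯ ⊔ C_k and 𝒟 = D_1 ⊔ ⋯ ⊔ D_k are ordered proper vertex k-colourings of Δ and Γ respectively, then the product of uniform face ideals is again a uniform face ideal: I(Δ, 𝒞) · I(Γ, 𝒟) = I(Σ, ℰ) for some simplicial complex Σ and some ordered proper vertex k-colouring ℰ of Σ with #E_i = #C_i + #D_i for each i. -/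
open MvPolynomial

namespace Stmt4Aux

variable {V : Type} [DecidableEq V] {k : ℕ}

/-- The face determined by an index vector `g`: from each class `E i` with `g i ≠ 0`
pick the `(g i)`-th element (1-indexed). -/
def faceOf (E : Fin k → List V) (g : Fin k → ℕ) : Finset V :=
  Finset.univ.biUnion fun i => if g i = 0 then ∅ else ((E i)[g i - 1]?).toFinset

lemma mem_faceOf {E : Fin k → List V} {g : Fin k → ℕ} {v : V} :
    v ∈ faceOf E g ↔ ∃ i, g i ≠ 0 ∧ (E i)[g i - 1]? = some v := by
  simp only [faceOf, Finset.mem_biUnion, Finset.mem_univ, true_and]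
  constructor
  · rintro ⟨i, hi⟩
    by_cases h0 : g i = 0
    · simp [h0] at hi
    · rw [if_neg h0, Option.mem_toFinset] at hi
      exact ⟨i, h0, hi⟩
  · rintro ⟨i, h0, hv⟩
    exact ⟨i, by rw [if_neg h0, Option.mem_toFinset]; exact hv⟩

lemma faceOf_zero (E : Fin k → List V) : faceOf E (fun _ => 0) = ∅ := by
  ext v; simp [faceOf]

lemma eVec_le (C : Fin k → List V) (σ : Finset V) (i : Fin k) :
    eVec C σ i ≤ (C i).length := by
  unfold eVec
  split
  · next h =>
    have := List.findIdx_lt_length_of_exists (List.any_eq_true.mp h)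
    omega
  · omega

lemma eVec_empty (C : Fin k → List V) (i : Fin k) : eVec C (∅ : Finset V) i = 0 := by
  simp [eVec]

lemma eVec_faceOf {E : Fin k → List V} (hnd : ∀ i, (E i).Nodup)
    (hpart : ∀ v : V, ∃! i, v ∈ E i) {g : Fin k → ℕ} (hg : ∀ i, g i ≤ (E i).length)
    (i : Fin k) : eVec E (faceOf E g) i = g i := by
  by_cases h0 : g i = 0
  · rw [h0]
    unfold eVec
    rw [if_neg]
    simp only [List.any_eq_true, decide_eq_true_eq, not_exists, not_and]
    intro v hv hvf
    obtain ⟨j, hj, hjv⟩ := mem_faceOf.mp hvf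
    have hvj : v ∈ E j := List.mem_of_getElem? hjv
    obtain ⟨i', _, huniq⟩ := hpart v
    have hji : j = i := (huniq j hvj).trans (huniq i hv).symm
    rw [hji] at hj
    exact hj h0
  · have hlt : g i - 1 < (E i).length := by have := hg i; omega
    have hv0 : (E i)[g i - 1]? = some (E i)[g i - 1] := List.getElem?_eq_getElem hlt
    have hmem : (E i)[g i - 1] ∈ faceOf E g := mem_faceOf.mpr ⟨i, h0, hv0⟩
    unfold eVec
    rw [if_pos, List.findIdx_eq hlt |>.mpr]
    · omega
    · refine ⟨by simpa using hmem, fun j hj => ?_⟩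
      have hjlt : j < (E i).length := by omega
      simp only [decide_eq_false_iff_not]
      intro hjf
      obtain ⟨j', hj', hj'v⟩ := mem_faceOf.mp hjf
      have h1 : (E i)[j] ∈ E i := List.getElem_mem hjlt
      have h2 : (E i)[j] ∈ E j' := List.mem_of_getElem? hj'v
      obtain ⟨i', _, huniq⟩ := hpart (E i)[j]
      have hj'i : j' = i := (huniq j' h2).trans (huniq i h1).symm
      rw [hj'i, List.getElem?_eq_getElem (by omega)] at hj'v
      have := ((hnd i).getElem_inj_iff).mp (Option.some_injective _ hj'v)
      omega
    · simp only [List.any_eq_true, decide_eq_true_eq]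
      exact ⟨_, List.getElem_mem hlt, hmem⟩

lemma any_congr {l : List V} {p q : V → Bool} (h : ∀ v ∈ l, p v = q v) :
    l.any p = l.any q := by
  induction l with
  | nil => rfl
  | cons a t ih =>
    simp only [List.any_cons, h a (by simp), ih fun v hv => h v (by simp [hv])]

lemma findIdx_congr {l : List V} {p q : V → Bool} (h : ∀ v ∈ l, p v = q v) :
    l.findIdx p = l.findIdx q := by
  induction l with
  | nil => rfl
  | cons a t ih =>
    rw [List.findIdx_cons, List.findIdx_cons, h a (by simp),
      ih fun v hv => h v (by simp [hv])]

lemma eVec_eq_ite {C : Fin k → List V} (hpart : ∀ v : V, ∃! i, v ∈ C i)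
    {σ σ' : Finset V} (keep : Fin k → Prop)
    (hmem : ∀ v, v ∈ σ' ↔ v ∈ σ ∧ ∀ j, v ∈ C j → keep j)
    (i : Fin k) [Decidable (keep i)] :
    eVec C σ' i = if keep i then eVec C σ i else 0 := by
  by_cases hk : keep i
  · rw [if_pos hk]
    have hagree : ∀ v ∈ C i, (decide (v ∈ σ') : Bool) = decide (v ∈ σ) := by
      intro v hv
      obtain ⟨i', _, huniq⟩ := hpart v
      simp only [decide_eq_decide, hmem v]
      constructor
      · exact fun h => h.1
      · intro h
        refine ⟨h, fun j hj => ?_⟩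
        rwa [(huniq j hj).trans (huniq i hv).symm]
    unfold eVec
    rw [any_congr hagree, findIdx_congr hagree]
  · rw [if_neg hk]
    unfold eVec
    rw [if_neg]
    simp only [List.any_eq_true, decide_eq_true_eq, not_exists, not_and]
    intro v hv hvf
    exact hk (((hmem v).mp hvf).2 i hv)

end Stmt4Aux

/-- Proposition 4.6: the product of two uniform face ideals (with respect to
ordered proper vertex `k`-colourings) is again a uniform face ideal, with respect to an ordered
proper vertex `k`-colouring whose classes have sizes `#E_i = #C_i + #D_i`. -/
theorem stmt4 {n m k : ℕ} (K : Type) [Field K]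
    (Δ : SimpComplex (Fin n)) (Γ : SimpComplex (Fin m))
    (C : Fin k → List (Fin n)) (D : Fin k → List (Fin m))
    (hC : IsOrderedColouring Δ C) (hD : IsOrderedColouring Γ D) :
    ∃ (N : ℕ) (S : SimpComplex (Fin N)) (E : Fin k → List (Fin N)),
      IsOrderedColouring S E ∧
      (∀ i, (E i).length = (C i).length + (D i).length) ∧
      uniformFaceIdeal K Δ C * uniformFaceIdeal K Γ D = uniformFaceIdeal K S E := by
  classical
  obtain ⟨hCnd, hCpart, -⟩ := hC
  obtain ⟨hDnd, hDpart, -⟩ := hD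
  set E : Fin k → List (Fin (n + m)) :=
    fun i => (C i).map (Fin.castAdd m) ++ (D i).map (Fin.natAdd n) with hE
  have hlen : ∀ i, (E i).length = (C i).length + (D i).length := by
    intro i; simp [hE]
  have hmemE : ∀ (j : Fin k) (v : Fin (n + m)),
      v ∈ E j ↔ (∃ x ∈ C j, Fin.castAdd m x = v) ∨ ∃ y ∈ D j, Fin.natAdd n y = v := by
    intro j v; simp [hE]
  have hcast_ne : ∀ (x : Fin n) (y : Fin m), Fin.castAdd m x ≠ Fin.natAdd n y := by
    intro x y h
    have hx := x.isLt
    have hval : (Fin.castAdd m x : Fin (n + m)).val = (Fin.natAdd n y : Fin (n + m)).val := by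
      rw [h]
    simp only [Fin.coe_castAdd, Fin.coe_natAdd] at hval
    omega
  have hcast_inj : Function.Injective (Fin.castAdd m : Fin n → Fin (n + m)) := by
    intro a b h
    apply Fin.ext
    have : (Fin.castAdd m a : Fin (n + m)).val = (Fin.castAdd m b : Fin (n + m)).val := by rw [h]
    simpa using this
  have hnat_inj : Function.Injective (Fin.natAdd n : Fin m → Fin (n + m)) := by
    intro a b h
    apply Fin.ext
    have : (Fin.natAdd n a : Fin (n + m)).val = (Fin.natAdd n b : Fin (n + m)).val := by rw [h]
    simp only [Fin.coe_natAdd] at this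
    omega
  have hE_nodup : ∀ i, (E i).Nodup := by
    intro i
    refine List.Nodup.append ((hCnd i).map hcast_inj) ((hDnd i).map hnat_inj) ?_
    intro a ha hb
    simp only [List.mem_map] at ha hb
    obtain ⟨x, -, rfl⟩ := ha
    obtain ⟨y, -, hy⟩ := hb
    exact hcast_ne x y hy.symm
  have hE_part : ∀ v : Fin (n + m), ∃! i, v ∈ E i := by
    intro v
    induction v using Fin.addCases with
    | left x =>
      obtain ⟨i, hi, huniq⟩ := hCpart x
      refine ⟨i, (hmemE i _).mpr (Or.inl ⟨x, hi, rfl⟩), fun j hj => ?_⟩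
      rcases (hmemE j _).mp hj with ⟨x', hx', hxx⟩ | ⟨y', hy', hyy⟩
      · exact huniq j ((hcast_inj hxx) ▸ hx')
      · exact absurd hyy (hcast_ne x y').symm.elim
    | right y =>
      obtain ⟨i, hi, huniq⟩ := hDpart y
      refine ⟨i, (hmemE i _).mpr (Or.inr ⟨y, hi, rfl⟩), fun j hj => ?_⟩
      rcases (hmemE j _).mp hj with ⟨x', hx', hxx⟩ | ⟨y', hy', hyy⟩
      · exact absurd hxx (hcast_ne x' y)
      · exact huniq j ((hnat_inj hyy) ▸ hy')
  have hbound : ∀ (σ : Finset (Fin n)) (τ : Finset (Fin m)) (i : Fin k),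
      eVec C σ i + eVec D τ i ≤ (E i).length := by
    intro σ τ i
    rw [hlen i]
    exact Nat.add_le_add (Stmt4Aux.eVec_le _ _ _) (Stmt4Aux.eVec_le _ _ _)
  let S : SimpComplex (Fin (n + m)) :=
    { faces := {ρ | ∃ σ ∈ Δ.faces, ∃ τ ∈ Γ.faces,
        ρ = Stmt4Aux.faceOf E fun i => eVec C σ i + eVec D τ i},
      empty_mem := ⟨∅, Δ.empty_mem, ∅, Γ.empty_mem, by
        simp [Stmt4Aux.eVec_empty, Stmt4Aux.faceOf_zero]⟩,
      down_closed := by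
        rintro ρ ρ' ⟨σ, hσ, τ, hτ, rfl⟩ hsub
        set g : Fin k → ℕ := fun i => eVec C σ i + eVec D τ i with hg
        set keep : Fin k → Prop :=
          fun i => ∃ v, v ∈ ρ' ∧ g i ≠ 0 ∧ (E i)[g i - 1]? = some v with hkeep
        refine ⟨σ.filter (fun v => ∀ j, v ∈ C j → keep j),
          Δ.down_closed hσ (Finset.filter_subset _ _),
          τ.filter (fun v => ∀ j, v ∈ D j → keep j),
          Γ.down_closed hτ (Finset.filter_subset _ _), ?_⟩
        have hgi : (fun i => eVec C (σ.filter fun v => ∀ j, v ∈ C j → keep j) i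
            + eVec D (τ.filter fun v => ∀ j, v ∈ D j → keep j) i)
            = fun i => if keep i then g i else 0 := by
          funext i
          rw [Stmt4Aux.eVec_eq_ite hCpart keep (fun v => Finset.mem_filter) i,
            Stmt4Aux.eVec_eq_ite hDpart keep (fun v => Finset.mem_filter) i]
          by_cases h : keep i <;> simp [h, hg]
        rw [hgi]
        ext v
        rw [Stmt4Aux.mem_faceOf]
        constructor
        · intro hv
          obtain ⟨i, h0, hvi⟩ := Stmt4Aux.mem_faceOf.mp (hsub hv)
          have hki : keep i := ⟨v, hv, h0, hvi⟩
          refine ⟨i, ?_, ?_⟩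
          · simp only [if_pos hki]; exact h0
          · simp only [if_pos hki]; exact hvi
        · rintro ⟨i, h0, hvi⟩
          by_cases hki : keep i
          · obtain ⟨v', hv', h0', hvi'⟩ := hki
            rw [if_pos (⟨v', hv', h0', hvi'⟩ : keep i)] at hvi
            have : v' = v := Option.some_injective _ (hvi'.symm.trans hvi)
            exact this ▸ hv'
          · simp [hki] at h0 }
  have hS_indep : ∀ i, S.IsIndep {v | v ∈ E i} := by
    intro i u hu v hv huv ρ hρ hc
    obtain ⟨σ, hσ, τ, hτ, rfl⟩ := hρ
    obtain ⟨iu, h0u, hgu⟩ := Stmt4Aux.mem_faceOf.mp hc.1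
    obtain ⟨iv, h0v, hgv⟩ := Stmt4Aux.mem_faceOf.mp hc.2
    obtain ⟨ju, -, huniq_u⟩ := hE_part u
    obtain ⟨jv, -, huniq_v⟩ := hE_part v
    have hiu : iu = i := (huniq_u iu (List.mem_of_getElem? hgu)).trans (huniq_u i hu).symm
    have hiv : iv = i := (huniq_v iv (List.mem_of_getElem? hgv)).trans (huniq_v i hv).symm
    apply huv
    subst hiu
    subst hiv
    exact Option.some_injective _ (hgu.symm.trans hgv)
  have hmono : ∀ σ ∈ Δ.faces, ∀ τ ∈ Γ.faces,
      uniformMonomial K C σ * uniformMonomial K D τ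
        = uniformMonomial K E (Stmt4Aux.faceOf E fun i => eVec C σ i + eVec D τ i) := by
    intro σ hσ τ hτ
    have hEe : ∀ i, eVec E (Stmt4Aux.faceOf E fun j => eVec C σ j + eVec D τ j) i
        = eVec C σ i + eVec D τ i := fun i =>
      Stmt4Aux.eVec_faceOf hE_nodup hE_part (fun j => hbound σ τ j) i
    unfold uniformMonomial
    rw [← Finset.prod_mul_distrib]
    refine Finset.prod_congr rfl fun i _ => ?_
    rw [hEe i, hlen i]
    have h1 := Stmt4Aux.eVec_le C σ i
    have h2 := Stmt4Aux.eVec_le D τ i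
    rw [show (C i).length + (D i).length - (eVec C σ i + eVec D τ i)
        = ((C i).length - eVec C σ i) + ((D i).length - eVec D τ i) from by omega,
      pow_add, pow_add]
    ring
  refine ⟨n + m, S, E, ⟨hE_nodup, hE_part, hS_indep⟩, hlen, ?_⟩
  unfold uniformFaceIdeal
  rw [Ideal.span_mul_span']
  congr 1
  ext p
  simp only [Set.mem_mul, Set.mem_setOf_eq]
  constructor
  · rintro ⟨a, ⟨σ, hσ, rfl⟩, b, ⟨τ, hτ, rfl⟩, rfl⟩
    exact ⟨Stmt4Aux.faceOf E fun i => eVec C σ i + eVec D τ i,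
      ⟨σ, hσ, τ, hτ, rfl⟩, hmono σ hσ τ hτ⟩
  · rintro ⟨ρ, ⟨σ, hσ, τ, hτ, rfl⟩, rfl⟩
    exact ⟨_, ⟨σ, hσ, rfl⟩, _, ⟨τ, hτ, rfl⟩, hmono σ hσ τ hτ⟩
end

section
/- Let Δ be a simplicial complex on [n] and let 𝒮 = {1} ⊔ ⋯ ⊔ {n} be the singleton colouring of Δ. If J is the Stanley–Reisner ideal of the Alexander dual (Δ_𝒮)^∨ of the complex Δ_𝒮, where the vertex i is associated to the variable x_i and the vertex i′ is associated to the variable y_i for each i ∈ [n], then J = I(Δ, 𝒮). -/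
open MvPolynomial

/-- The Biermann–Van Tuyl complex `Δ_𝒮` for the singleton colouring: the complex on the
vertex set `[n] ⊔ {1',…,n'}` (encoded as `Fin n ⊕ Fin n`, with `Sum.inl i = i` and
`Sum.inr i = i'`) whose faces are the sets `σ ∪ τ` with `σ ∈ Δ` and
`τ ⊆ {j' : j ∉ σ}`. -/
def deltaS {n : ℕ} (Δ : SimpComplex (Fin n)) : SimpComplex (Fin n ⊕ Fin n) where
  faces := {F | (Finset.univ.filter (fun i => Sum.inl i ∈ F)) ∈ Δ.faces ∧
      ∀ j : Fin n, Sum.inr j ∈ F → Sum.inl j ∉ F}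
  empty_mem := by
    constructor
    · simpa using Δ.empty_mem
    · simp
  down_closed := by
    intro F F' hF hsub
    refine ⟨Δ.down_closed hF.1 ?_, fun j hj hl => hF.2 j (hsub hj) (hsub hl)⟩
    intro i hi
    simp only [Finset.mem_filter] at hi ⊢
    exact ⟨hi.1, hsub hi.2⟩

/-- The set of faces of the Alexander dual of a complex on the finite vertex type `V`:
the complements of the non-faces. -/
def dualFaces {V : Type} [Fintype V] [DecidableEq V] (Γ : SimpComplex V) :
    Set (Finset V) :=
  {F | Fᶜ ∉ Γ.faces}

/-- The Stanley–Reisner ideal of a collection of faces on the vertex type `V`, the vertices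
being identified with the variables of `MvPolynomial V K`: it is generated by the squarefree
monomials attached to the non-faces. -/
noncomputable def srIdealOfSet (K : Type) [Field K] {V : Type} (S : Set (Finset V)) :
    Ideal (MvPolynomial V K) :=
  Ideal.span {m | ∃ σ : Finset V, σ ∉ S ∧ m = ∏ v ∈ σ, X v}



/-- The uniform monomial for the singleton colouring is the squarefree monomial
on the vertex set `σᶜ.image inl ∪ σ.image inr`. -/
lemma uniformMonomial_singleton {n : ℕ} (K : Type) [Field K] (σ : Finset (Fin n)) :
    uniformMonomial K (fun i : Fin n => [i]) σ =
      ∏ v ∈ (σᶜ.image Sum.inl ∪ σ.image Sum.inr : Finset (Fin n ⊕ Fin n)), X v := by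
  have hterm : ∀ i : Fin n,
      (X (Sum.inl i) ^ (([i] : List (Fin n)).length - eVec (fun i : Fin n => [i]) σ i) *
        X (Sum.inr i) ^ eVec (fun i : Fin n => [i]) σ i : MvPolynomial (Fin n ⊕ Fin n) K)
        = if i ∈ σ then X (Sum.inr i) else X (Sum.inl i) := by
    intro i
    by_cases h : i ∈ σ <;> simp [eVec, List.findIdx, List.findIdx.go, h]
  have hdisj : Disjoint (σᶜ.image Sum.inl) (σ.image (Sum.inr : Fin n → Fin n ⊕ Fin n)) := by
    simp [Finset.disjoint_left]
  rw [Finset.prod_union hdisj,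
    Finset.prod_image (fun a _ b _ h => Sum.inl_injective h),
    Finset.prod_image (fun a _ b _ h => Sum.inr_injective h)]
  unfold uniformMonomial
  calc ∏ i : Fin n,
        (X (Sum.inl i) ^ (([i] : List (Fin n)).length - eVec (fun i : Fin n => [i]) σ i) *
          X (Sum.inr i) ^ eVec (fun i : Fin n => [i]) σ i : MvPolynomial (Fin n ⊕ Fin n) K)
      = ∏ i : Fin n, (if i ∈ σ then X (Sum.inr i) else X (Sum.inl i) :
          MvPolynomial (Fin n ⊕ Fin n) K) := Finset.prod_congr rfl (fun i _ => hterm i)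
    _ = (∏ i ∈ Finset.univ.filter (· ∈ σ), (X (Sum.inr i) : MvPolynomial (Fin n ⊕ Fin n) K)) *
        ∏ i ∈ Finset.univ.filter (¬ · ∈ σ), (X (Sum.inl i) : MvPolynomial (Fin n ⊕ Fin n) K) :=
        Finset.prod_ite _ _
    _ = _ := by
        have h1 : Finset.univ.filter (· ∈ σ) = σ := by ext i; simp
        have h2 : Finset.univ.filter (¬ · ∈ σ) = σᶜ := by ext i; simp
        rw [h1, h2, mul_comm]

/-- Proposition 4.8: for the singleton colouring `𝒮 = {1} ⊔ ⋯ ⊔ {n}`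
(encoded by the lists `fun i => [i]`), the Stanley–Reisner ideal of the Alexander dual
`(Δ_𝒮)^∨` — vertex `i` corresponding to `x_i = X (Sum.inl i)` and vertex `i'` to
`y_i = X (Sum.inr i)` — equals the uniform face ideal `I(Δ, 𝒮)`. -/
theorem stmt5 {n : ℕ} (K : Type) [Field K] (Δ : SimpComplex (Fin n)) :
    srIdealOfSet K (dualFaces (deltaS Δ)) =
      uniformFaceIdeal K Δ (fun i : Fin n => [i]) := by
  apply le_antisymm
  · rw [srIdealOfSet, Ideal.span_le]
    rintro m ⟨G, hG, rfl⟩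
    simp only [dualFaces, Set.mem_setOf_eq, not_not] at hG
    have hσ : (Finset.univ.filter (fun i => Sum.inl i ∈ Gᶜ)) ∈ Δ.faces := hG.1
    set σ := Finset.univ.filter (fun i => Sum.inl i ∈ Gᶜ) with hσdef
    have hsub : (σᶜ.image Sum.inl ∪ σ.image Sum.inr : Finset (Fin n ⊕ Fin n)) ⊆ G := by
      intro v hv
      rcases Finset.mem_union.1 hv with h | h
      · obtain ⟨i, hi, rfl⟩ := Finset.mem_image.1 h
        have : Sum.inl i ∉ Gᶜ := by
          intro hc
          exact (Finset.mem_compl.1 hi) (Finset.mem_filter.2 ⟨Finset.mem_univ i, hc⟩)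
        simpa using this
      · obtain ⟨j, hj, rfl⟩ := Finset.mem_image.1 h
        have hjl : Sum.inl j ∈ Gᶜ := by
          have := Finset.mem_filter.1 (hσdef ▸ hj)
          exact this.2
        have : Sum.inr j ∉ Gᶜ := fun hc => hG.2 j hc hjl
        simpa using this
    rw [← Finset.prod_sdiff hsub]
    apply Ideal.mul_mem_left
    rw [← uniformMonomial_singleton]
    exact Ideal.subset_span ⟨σ, hσ, rfl⟩
  · rw [uniformFaceIdeal, Ideal.span_le]
    rintro m ⟨σ, hσ, rfl⟩
    apply Ideal.subset_span
    refine ⟨(σᶜ.image Sum.inl ∪ σ.image Sum.inr : Finset (Fin n ⊕ Fin n)), ?_,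
      uniformMonomial_singleton K σ⟩
    simp only [dualFaces, Set.mem_setOf_eq, not_not]
    constructor
    · have : Finset.univ.filter
          (fun i => Sum.inl i ∈ (σᶜ.image Sum.inl ∪ σ.image Sum.inr : Finset (Fin n ⊕ Fin n))ᶜ)
          = σ := by
        ext i; simp
      rw [this]; exact hσ
    · intro j hj hl
      simp at hj hl
      exact hj hl
end

section
/- Let Δ be a simplicial complex and let 𝒞 be an ordered proper vertex k-colouring of Δ. The index vector poset P(Δ, 𝒞) is a finite order ideal of ℕ^k (under the componentwise partial order) if and only if 𝒞 is a nested colouring endowed with the nesting order. Moreover, every finite order ideal of ℕ^k arises as P(Δ, 𝒞) for some simplicial complex Δ and nested colouring 𝒞 with the nesting order. -/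
open MvPolynomial

/-- The index vector poset `P(Δ,𝒞)` of a complex with respect to an ordered colouring:
the set of index vectors of faces, as a subset of `ℕ^k` with the componentwise order. -/
def indexSet {V : Type} [DecidableEq V] {k : ℕ} (Δ : SimpComplex V)
    (C : Fin k → List V) : Set (Fin k → ℕ) :=
  {e | ∃ σ ∈ Δ.faces, e = fun i => eVec C σ i}

/-- A subset of `ℕ^k` is an order ideal for the componentwise partial order. -/
def IsOrderIdealNk {k : ℕ} (S : Set (Fin k → ℕ)) : Prop :=
  ∀ b ∈ S, ∀ a : Fin k → ℕ, a ≤ b → a ∈ S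

set_option linter.unusedSectionVars false
namespace Stmt11Aux

variable {V : Type} [DecidableEq V] [Fintype V] {k : ℕ}

/-- The canonical face determined by an index vector. -/
def Fface (C : Fin k → List V) (e : Fin k → ℕ) : Finset V :=
  Finset.univ.filter (fun v => ∃ i, 0 < e i ∧ (C i)[e i - 1]? = some v)

lemma mem_Fface {C : Fin k → List V} {e : Fin k → ℕ} {v : V} :
    v ∈ Fface C e ↔ ∃ i, 0 < e i ∧ (C i)[e i - 1]? = some v := by
  simp [Fface]

lemma eVec_eq_zero_iff {C : Fin k → List V} {σ : Finset V} {i : Fin k} :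
    eVec C σ i = 0 ↔ ∀ v ∈ C i, v ∉ σ := by
  unfold eVec
  by_cases h : (C i).any (fun v => decide (v ∈ σ)) = true
  · simp only [h, if_true]
    rw [List.any_eq_true] at h
    obtain ⟨x, hx, hx2⟩ := h
    simp only [decide_eq_true_iff] at hx2
    constructor
    · intro h0; omega
    · intro hall; exact absurd hx2 (hall x hx)
  · simp only [h, if_false]
    constructor
    · intro _ v hv hvσ
      exact h (List.any_eq_true.mpr ⟨v, hv, decide_eq_true hvσ⟩)
    · intro _; rfl

lemma eVec_spec {C : Fin k → List V} {σ : Finset V} {i : Fin k} (h : 0 < eVec C σ i) :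
    ∃ hlt : eVec C σ i - 1 < (C i).length,
      (C i)[eVec C σ i - 1] ∈ σ ∧
      ∀ j (hj : j < eVec C σ i - 1), (C i)[j]'(hj.trans hlt) ∉ σ := by
  have hany : (C i).any (fun v => decide (v ∈ σ)) = true := by
    by_contra hc
    unfold eVec at h
    rw [if_neg hc] at h
    exact absurd h (lt_irrefl 0)
  have heq : eVec C σ i = (C i).findIdx (fun v => decide (v ∈ σ)) + 1 := by
    unfold eVec; rw [if_pos hany]
  have hlt : (C i).findIdx (fun v => decide (v ∈ σ)) < (C i).length := by
    rw [List.findIdx_lt_length]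
    rw [List.any_eq_true] at hany
    exact hany
  have hspec := (List.findIdx_eq (p := fun v => decide (v ∈ σ)) hlt).mp rfl
  have h1 : eVec C σ i - 1 = (C i).findIdx (fun v => decide (v ∈ σ)) := by omega
  refine ⟨by omega, ?_, ?_⟩
  · have := hspec.1
    simp only [decide_eq_true_iff] at this
    simpa [h1] using this
  · intro j hj
    have := hspec.2 j (by omega)
    simp only [decide_eq_false_iff_not] at this
    simpa [h1] using this

lemma eVec_eq_of {C : Fin k → List V} {σ : Finset V} {i : Fin k} {j : ℕ}
    (hlt : j < (C i).length) (hm : (C i)[j] ∈ σ)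
    (hf : ∀ j' (h' : j' < j), (C i)[j']'(h'.trans hlt) ∉ σ) :
    eVec C σ i = j + 1 := by
  have hany : (C i).any (fun v => decide (v ∈ σ)) = true :=
    List.any_eq_true.mpr ⟨(C i)[j], List.getElem_mem hlt, decide_eq_true hm⟩
  have hfi : (C i).findIdx (fun v => decide (v ∈ σ)) = j := by
    rw [List.findIdx_eq hlt]
    exact ⟨decide_eq_true hm, fun j' hj' => decide_eq_false (hf j' hj')⟩
  unfold eVec
  rw [if_pos hany, hfi]

lemma eVec_le_length {C : Fin k → List V} {σ : Finset V} {i : Fin k} :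
    eVec C σ i ≤ (C i).length := by
  by_cases h : 0 < eVec C σ i
  · obtain ⟨hlt, -, -⟩ := eVec_spec h; omega
  · omega

end Stmt11Aux

namespace Stmt11Aux

variable {V : Type} [DecidableEq V] [Fintype V] {k : ℕ}

lemma classEq {C : Fin k → List V} (hP : ∀ v : V, ∃! i, v ∈ C i) {v : V} {i j : Fin k}
    (hv : v ∈ C i) (hv' : v ∈ C j) : i = j := by
  obtain ⟨w, -, hu⟩ := hP v
  rw [hu i hv, hu j hv']

/-- Lemma A: a face is determined by its index vector. -/
lemma face_eq_Fface {Δ : SimpComplex V} {C : Fin k → List V}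
    (hP : ∀ v : V, ∃! i, v ∈ C i) (hI : ∀ i, Δ.IsIndep {v | v ∈ C i})
    {σ : Finset V} (hσ : σ ∈ Δ.faces) :
    σ = Fface C (fun i => eVec C σ i) := by
  ext v
  rw [mem_Fface]
  constructor
  · intro hv
    obtain ⟨i, hi, -⟩ := hP v
    have hpos : 0 < eVec C σ i := by
      rcases Nat.eq_zero_or_pos (eVec C σ i) with h0 | h
      · exact absurd hv (eVec_eq_zero_iff.mp h0 v hi)
      · exact h
    obtain ⟨hlt, hmem, -⟩ := eVec_spec hpos
    have hwv : (C i)[eVec C σ i - 1] = v := by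
      by_contra hne
      exact hI i _ (List.getElem_mem hlt) v hi hne σ hσ ⟨hmem, hv⟩
    exact ⟨i, hpos, List.getElem?_eq_some_iff.mpr ⟨hlt, hwv⟩⟩
  · rintro ⟨i, hpos, hsome⟩
    obtain ⟨hlt, hveq⟩ := List.getElem?_eq_some_iff.mp hsome
    obtain ⟨hlt', hmem, -⟩ := eVec_spec hpos
    rwa [hveq] at hmem

/-- Every member of `Fface C e` lying in class `i` is the `e i`-th element. -/
lemma Fface_class_unique {C : Fin k → List V} (hP : ∀ v : V, ∃! i, v ∈ C i)
    {e : Fin k → ℕ} {w : V} {i : Fin k} (hw : w ∈ Fface C e) (hwi : w ∈ C i) :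
    0 < e i ∧ (C i)[e i - 1]? = some w := by
  obtain ⟨j, hj, hsome⟩ := mem_Fface.mp hw
  obtain ⟨hlt, hveq⟩ := List.getElem?_eq_some_iff.mp hsome
  have hwj : w ∈ C j := hveq ▸ List.getElem_mem hlt
  have : j = i := classEq hP hwj hwi
  subst this
  exact ⟨hj, hsome⟩

/-- Lemma B: the index vector of the canonical face. -/
lemma eVec_Fface {C : Fin k → List V} (hN : ∀ i, (C i).Nodup)
    (hP : ∀ v : V, ∃! i, v ∈ C i) {e : Fin k → ℕ}
    (hval : ∀ i, e i ≤ (C i).length) (i : Fin k) :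
    eVec C (Fface C e) i = e i := by
  rcases Nat.eq_zero_or_pos (e i) with h0 | hpos
  · rw [h0, eVec_eq_zero_iff]
    intro v hv hvF
    obtain ⟨hj, -⟩ := Fface_class_unique hP hvF hv
    omega
  · have hlt : e i - 1 < (C i).length := by have := hval i; omega
    have heq : eVec C (Fface C e) i = (e i - 1) + 1 := by
      apply eVec_eq_of hlt
      · exact mem_Fface.mpr ⟨i, hpos, List.getElem?_eq_some_iff.mpr ⟨hlt, rfl⟩⟩
      · intro j' hj' hmem
        have hwi : (C i)[j']'(hj'.trans hlt) ∈ C i := List.getElem_mem _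
        obtain ⟨-, hsome⟩ := Fface_class_unique hP hmem hwi
        obtain ⟨hlt2, hveq⟩ := List.getElem?_eq_some_iff.mp hsome
        have : e i - 1 = j' := ((hN i).getElem_inj_iff).mp hveq
        omega
    omega

/-- Replacing a vertex of a face by one with larger link keeps it a face. -/
lemma step {Δ : SimpComplex V} {σ : Finset V} {u v : V} (hσ : σ ∈ Δ.faces)
    (hu : u ∈ σ) (hl : Δ.link u ⊆ Δ.link v) : insert v (σ.erase u) ∈ Δ.faces := by
  have h1 : σ.erase u ∈ Δ.link u := by
    refine ⟨Δ.down_closed hσ (Finset.erase_subset _ _), Finset.notMem_erase _ _, ?_⟩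
    rwa [Finset.insert_erase hu]
  exact (hl h1).2.2

/-- Updating coordinate `i` to `0` removes the class-`i` vertex. -/
lemma Fface_update_zero {C : Fin k → List V} (hP : ∀ v : V, ∃! i, v ∈ C i)
    {e : Fin k → ℕ} {i : Fin k} (hpos : 0 < e i) (hlt : e i - 1 < (C i).length) :
    Fface C (Function.update e i 0) = (Fface C e).erase ((C i)[e i - 1]) := by
  ext w
  rw [mem_Fface, Finset.mem_erase, mem_Fface]
  constructor
  · rintro ⟨j, hj, hsome⟩
    have hji : j ≠ i := by
      intro h; subst h; rw [Function.update_self] at hj; omega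
    rw [Function.update_of_ne hji] at hj hsome
    obtain ⟨hlt2, hveq⟩ := List.getElem?_eq_some_iff.mp hsome
    refine ⟨?_, j, hj, hsome⟩
    intro hwu
    have hwj : w ∈ C j := hveq ▸ List.getElem_mem hlt2
    have hwi : w ∈ C i := hwu ▸ List.getElem_mem hlt
    exact hji (classEq hP hwj hwi)
  · rintro ⟨hne, j, hj, hsome⟩
    have hji : j ≠ i := by
      intro h; subst h
      obtain ⟨hlt2, hveq⟩ := List.getElem?_eq_some_iff.mp hsome
      exact hne hveq.symm
    exact ⟨j, by rwa [Function.update_of_ne hji], by rwa [Function.update_of_ne hji]⟩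

/-- Updating coordinate `i` to a positive value `m` swaps the class-`i` vertex. -/
lemma Fface_update_pos {C : Fin k → List V} (hP : ∀ v : V, ∃! i, v ∈ C i)
    {e : Fin k → ℕ} {i : Fin k} {m : ℕ} (hpos : 0 < e i) (hlt : e i - 1 < (C i).length)
    (hm : 0 < m) (hmlt : m - 1 < (C i).length) :
    Fface C (Function.update e i m) =
      insert ((C i)[m - 1]) ((Fface C e).erase ((C i)[e i - 1])) := by
  ext w
  rw [mem_Fface, Finset.mem_insert, Finset.mem_erase, mem_Fface]
  constructor
  · rintro ⟨j, hj, hsome⟩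
    by_cases hji : j = i
    · subst hji
      rw [Function.update_self] at hsome
      obtain ⟨hlt2, hveq⟩ := List.getElem?_eq_some_iff.mp hsome
      exact Or.inl hveq.symm
    · rw [Function.update_of_ne hji] at hj hsome
      obtain ⟨hlt2, hveq⟩ := List.getElem?_eq_some_iff.mp hsome
      refine Or.inr ⟨?_, j, hj, hsome⟩
      intro hwu
      have hwj : w ∈ C j := hveq ▸ List.getElem_mem hlt2
      have hwi : w ∈ C i := hwu ▸ List.getElem_mem hlt
      exact hji (classEq hP hwj hwi)
  · rintro (hwv | ⟨hne, j, hj, hsome⟩)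
    · exact ⟨i, by rw [Function.update_self]; exact hm,
        by rw [Function.update_self]; exact List.getElem?_eq_some_iff.mpr ⟨hmlt, hwv.symm⟩⟩
    · have hji : j ≠ i := by
        intro h; subst h
        obtain ⟨hlt2, hveq⟩ := List.getElem?_eq_some_iff.mp hsome
        exact hne hveq.symm
      exact ⟨j, by rwa [Function.update_of_ne hji], by rwa [Function.update_of_ne hji]⟩

end Stmt11Aux

namespace Stmt11Aux

variable {V : Type} [DecidableEq V] [Fintype V] {k : ℕ}

/-- Descent: if the canonical face of `b` is a face, so is that of any `a ≤ b`. -/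
lemma Fface_mem_of_le {Δ : SimpComplex V} {C : Fin k → List V}
    (hN : ∀ i, (C i).Nodup) (hP : ∀ v : V, ∃! i, v ∈ C i)
    (hNest : IsNestingOrdered Δ C) :
    ∀ m (a b : Fin k → ℕ), (∑ i, b i) = m → a ≤ b → (∀ i, b i ≤ (C i).length) →
      Fface C b ∈ Δ.faces → Fface C a ∈ Δ.faces := by
  intro m
  induction m using Nat.strong_induction_on with
  | _ m ih =>
    intro a b hsum hab hval hb
    by_cases hEq : a = b
    · rwa [hEq]
    · have hex : ∃ i, a i < b i := by
        by_contra h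
        push_neg at h
        exact hEq (funext fun i => le_antisymm (hab i) (h i))
      obtain ⟨i, hi⟩ := hex
      have hbpos : 0 < b i := by omega
      have hlt : b i - 1 < (C i).length := by have := hval i; omega
      set b' := Function.update b i (b i - 1) with hb'def
      clear_value b'
      have hb' : Fface C b' ∈ Δ.faces := by
        by_cases h1 : b i - 1 = 0
        · have : b' = Function.update b i 0 := by rw [hb'def, h1]
          rw [this, Fface_update_zero hP hbpos hlt]
          exact Δ.down_closed hb (Finset.erase_subset _ _)
        · rw [hb'def, Fface_update_pos hP hbpos hlt (by omega) (by omega)]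
          apply step hb
          · exact mem_Fface.mpr ⟨i, hbpos, List.getElem?_eq_some_iff.mpr ⟨hlt, rfl⟩⟩
          · have hpw := (List.pairwise_iff_getElem).mp (hNest i)
            exact hpw (b i - 1 - 1) (b i - 1) (by omega) hlt (by omega)
      have hsum' : (∑ j, b' j) = m - 1 := by
        have h1 : (∑ j, b j) = b i + ∑ j ∈ Finset.univ.erase i, b j :=
          (Finset.add_sum_erase _ _ (Finset.mem_univ i)).symm
        have h2 : (∑ j, b' j) = b' i + ∑ j ∈ Finset.univ.erase i, b' j :=
          (Finset.add_sum_erase _ _ (Finset.mem_univ i)).symm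
        have h3 : ∑ j ∈ Finset.univ.erase i, b' j = ∑ j ∈ Finset.univ.erase i, b j := by
          apply Finset.sum_congr rfl
          intro j hj
          rw [hb'def, Function.update_of_ne (Finset.ne_of_mem_erase hj)]
        have h4 : b' i = b i - 1 := by rw [hb'def, Function.update_self]
        rw [h3, h4] at h2
        omega
      have hm1 : b i ≤ m :=
        hsum ▸ Finset.single_le_sum (fun j _ => Nat.zero_le (b j)) (Finset.mem_univ i)
      refine ih (m - 1) (by omega) a b' hsum' ?_ ?_ hb'
      · intro j
        show a j ≤ b' j
        by_cases hji : j = i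
        · subst hji
          have : b' j = b j - 1 := by rw [hb'def, Function.update_self]
          omega
        · have : b' j = b j := by rw [hb'def, Function.update_of_ne hji]
          rw [this]; exact hab j
      · intro j
        by_cases hji : j = i
        · subst hji
          have : b' j = b j - 1 := by rw [hb'def, Function.update_self]
          have := hval j; omega
        · have : b' j = b j := by rw [hb'def, Function.update_of_ne hji]
          rw [this]; exact hval j

lemma indexSet_finite {Δ : SimpComplex V} {C : Fin k → List V} :
    (indexSet Δ C).Finite := by
  apply Set.Finite.subset (Set.finite_univ.image (fun σ : Finset V => fun i => eVec C σ i))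
  rintro e ⟨σ, -, he⟩
  exact ⟨σ, trivial, he.symm⟩

/-- The main equivalence. -/
lemma main_iff {Δ : SimpComplex V} {C : Fin k → List V}
    (hC : IsOrderedColouring Δ C) :
    ((indexSet Δ C).Finite ∧ IsOrderIdealNk (indexSet Δ C)) ↔ IsNestingOrdered Δ C := by
  obtain ⟨hN, hP, hI⟩ := hC
  constructor
  · rintro ⟨-, hIdeal⟩ i
    rw [List.pairwise_iff_getElem]
    intro p q hp hq hpq τ hτ
    obtain ⟨hτf, huτ, hins⟩ := hτ
    have hσ : insert ((C i)[q]) τ ∈ Δ.faces := hins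
    have hei : eVec C (insert ((C i)[q]) τ) i = q + 1 := by
      apply eVec_eq_of hq (Finset.mem_insert_self _ τ)
      intro j' hj' hmem
      have hne : (C i)[j']'(hj'.trans hq) ≠ (C i)[q] := by
        intro h
        have := ((hN i).getElem_inj_iff).mp h
        omega
      exact hI i _ (List.getElem_mem _) _ (List.getElem_mem hq) hne _ hσ
        ⟨hmem, Finset.mem_insert_self _ τ⟩
    set eσ : Fin k → ℕ := fun j => eVec C (insert ((C i)[q]) τ) j with heσdef
    have heiq : eσ i = q + 1 := hei
    have heS : eσ ∈ indexSet Δ C := ⟨_, hσ, rfl⟩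
    have hσF : insert ((C i)[q]) τ = Fface C eσ := face_eq_Fface hP hI hσ
    clear_value eσ
    have haS : Function.update eσ i (p + 1) ∈ indexSet Δ C := by
      apply hIdeal eσ heS
      intro j
      show Function.update eσ i (p + 1) j ≤ eσ j
      by_cases hji : j = i
      · subst hji
        rw [Function.update_self]
        omega
      · rw [Function.update_of_ne hji]
    obtain ⟨σ', hσ', ha'⟩ := haS
    have hσ'eq : σ' = Fface C (Function.update eσ i (p + 1)) := by
      rw [face_eq_Fface hP hI hσ', ← ha']
    have hltq : eσ i - 1 < (C i).length := by omega
    have hFa : Fface C (Function.update eσ i (p + 1)) =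
        insert ((C i)[p + 1 - 1]'(by omega))
          ((Fface C eσ).erase ((C i)[eσ i - 1]'hltq)) :=
      Fface_update_pos hP (by omega) hltq (by omega) (by omega)
    have hidx1 : eσ i - 1 = q := by omega
    have hidx2 : p + 1 - 1 = p := by omega
    simp only [hidx1, hidx2] at hFa
    rw [← hσF, Finset.erase_insert huτ] at hFa
    have hvτ : (C i)[p] ∉ τ := by
      intro hvt
      have hvu : (C i)[p] ≠ (C i)[q] := by
        intro h
        have := ((hN i).getElem_inj_iff).mp h
        omega
      exact hI i _ (List.getElem_mem hp) _ (List.getElem_mem hq) hvu _ hσ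
        ⟨Finset.mem_insert_of_mem hvt, Finset.mem_insert_self _ τ⟩
    refine ⟨hτf, hvτ, ?_⟩
    rw [← hFa, ← hσ'eq]
    exact hσ'
  · intro hNest
    refine ⟨indexSet_finite, ?_⟩
    rintro b ⟨σ, hσ, hbe⟩ a hab
    have hval : ∀ i, b i ≤ (C i).length := by
      intro i; rw [hbe]; exact eVec_le_length
    have hFb : Fface C b ∈ Δ.faces := by
      rw [hbe, ← face_eq_Fface hP hI hσ]; exact hσ
    have hFa : Fface C a ∈ Δ.faces :=
      Fface_mem_of_le hN hP hNest _ a b rfl hab hval hFb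
    refine ⟨Fface C a, hFa, ?_⟩
    funext i
    rw [eVec_Fface hN hP (fun i => le_trans (hab i) (hval i)) i]

end Stmt11Aux

set_option maxHeartbeats 1000000 in
/-- Proposition 6.2: the index vector poset `P(Δ,𝒞)` is a finite order
ideal of `ℕ^k` iff `𝒞` is a nested colouring endowed with the nesting order; moreover every
finite (nonempty) order ideal of `ℕ^k` arises this way. -/
theorem stmt11 {n k : ℕ} (Δ : SimpComplex (Fin n))
    (C : Fin k → List (Fin n)) (hC : IsOrderedColouring Δ C) :
    (((indexSet Δ C).Finite ∧ IsOrderIdealNk (indexSet Δ C)) ↔ IsNestingOrdered Δ C) ∧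
    (∀ S : Set (Fin k → ℕ), S.Finite → S.Nonempty → IsOrderIdealNk S →
      ∃ (n' : ℕ) (Δ' : SimpComplex (Fin n')) (C' : Fin k → List (Fin n')),
        IsOrderedColouring Δ' C' ∧ IsNestingOrdered Δ' C' ∧ indexSet Δ' C' = S) := by
  constructor
  · exact Stmt11Aux.main_iff hC
  · intro S hSfin hSne hSideal
    classical
    set N := (hSfin.toFinset.sup fun e => Finset.univ.sup e) + 1 with hNdef
    have hbound : ∀ e ∈ S, ∀ i, e i < N := by
      intro e he i
      have h1 : e i ≤ Finset.univ.sup e := Finset.le_sup (Finset.mem_univ i)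
      have h2 : Finset.univ.sup e ≤ hSfin.toFinset.sup (fun e => Finset.univ.sup e) :=
        Finset.le_sup (hSfin.mem_toFinset.mpr he)
      omega
    have hN0 : 0 < N := by omega
    clear_value N
    -- the vertex map
    have hvtx : ∀ (i : Fin k) (j : Fin N), i.1 * N + j.1 < k * N := by
      intro i j
      calc i.1 * N + j.1 < i.1 * N + N := by omega
        _ = (i.1 + 1) * N := by ring
        _ ≤ k * N := Nat.mul_le_mul_right N i.2
    set C' : Fin k → List (Fin (k * N)) :=
      fun i => List.ofFn (fun j : Fin N => ⟨i.1 * N + j.1, hvtx i j⟩) with hC'def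
    have hlen : ∀ i, (C' i).length = N := by
      intro i; rw [hC'def]; exact List.length_ofFn
    have hgetval : ∀ (i : Fin k) (j : ℕ) (hj : j < (C' i).length),
        ((C' i)[j]).1 = i.1 * N + j := by
      intro i j hj
      have hjN : j < N := by rwa [hlen i] at hj
      simp [hC'def, List.getElem_ofFn]
    have hmemC' : ∀ (i : Fin k) (v : Fin (k * N)),
        v ∈ C' i ↔ i.1 * N ≤ v.1 ∧ v.1 < i.1 * N + N := by
      intro i v
      rw [hC'def]
      simp only [List.mem_ofFn, Set.mem_range]
      constructor
      · rintro ⟨j, hj⟩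
        rw [← hj]
        refine ⟨Nat.le_add_right _ _, ?_⟩
        show i.1 * N + j.1 < i.1 * N + N
        have := j.2
        omega
      · rintro ⟨h1, h2⟩
        refine ⟨⟨v.1 - i.1 * N, by omega⟩, ?_⟩
        apply Fin.ext
        show i.1 * N + (v.1 - i.1 * N) = v.1
        omega
    -- nodup
    have hN' : ∀ i, (C' i).Nodup := by
      intro i
      rw [hC'def, List.nodup_ofFn]
      intro j1 j2 h
      have := congrArg Fin.val h
      simp at this
      exact Fin.ext (by omega)
    -- partition
    have hltq : ∀ v : Fin (k * N), v.1 < (v.1 / N) * N + N := by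
      intro v
      have hmod := Nat.div_add_mod v.1 N
      have hmlt := Nat.mod_lt v.1 hN0
      calc v.1 = N * (v.1 / N) + v.1 % N := hmod.symm
        _ < N * (v.1 / N) + N := by omega
        _ = (v.1 / N) * N + N := by ring
    have hP' : ∀ v : Fin (k * N), ∃! i, v ∈ C' i := by
      intro v
      have hvk : v.1 / N < k := by
        rw [Nat.div_lt_iff_lt_mul hN0]
        exact v.2
      refine ⟨⟨v.1 / N, hvk⟩, ?_, ?_⟩
      · show v ∈ C' ⟨v.1 / N, hvk⟩
        rw [hmemC']
        exact ⟨Nat.div_mul_le_self v.1 N, hltq v⟩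
      · intro i hi
        have hi' : v ∈ C' i := hi
        rw [hmemC'] at hi'
        apply Fin.ext
        show i.1 = v.1 / N
        refine (Nat.div_eq_of_lt_le hi'.1 ?_).symm
        calc v.1 < i.1 * N + N := hi'.2
          _ = (i.1 + 1) * N := by ring
    -- the complex
    set Δ' : SimpComplex (Fin (k * N)) :=
      { faces := {σ | ∃ e ∈ S, σ ⊆ Stmt11Aux.Fface C' e}
        empty_mem := ⟨hSne.choose, hSne.choose_spec, Finset.empty_subset _⟩
        down_closed := by
          rintro σ τ ⟨e, he, hsub⟩ hτσ
          exact ⟨e, he, hτσ.trans hsub⟩ } with hΔ'def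
    -- independence
    have hI' : ∀ i, Δ'.IsIndep {v | v ∈ C' i} := by
      intro i u hu v hv huv σ hσ ⟨huσ, hvσ⟩
      obtain ⟨e, he, hsub⟩ := hσ
      obtain ⟨-, hsu⟩ := Stmt11Aux.Fface_class_unique hP' (hsub huσ) hu
      obtain ⟨-, hsv⟩ := Stmt11Aux.Fface_class_unique hP' (hsub hvσ) hv
      rw [hsu] at hsv
      exact huv (Option.some_injective _ hsv)
    have hOC' : IsOrderedColouring Δ' C' := ⟨hN', hP', hI'⟩
    -- index set equals S
    have hIdx : indexSet Δ' C' = S := by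
      apply Set.eq_of_subset_of_subset
      · rintro e' ⟨σ, ⟨e, he, hsub⟩, he'⟩
        apply hSideal e he
        intro i
        rw [he']
        rcases Nat.eq_zero_or_pos (eVec C' σ i) with h0 | hpos
        · simp only
          omega
        · obtain ⟨hlt, hmem, -⟩ := Stmt11Aux.eVec_spec hpos
          have hw : (C' i)[eVec C' σ i - 1] ∈ C' i := List.getElem_mem hlt
          obtain ⟨hepos, hsome⟩ := Stmt11Aux.Fface_class_unique hP' (hsub hmem) hw
          obtain ⟨hlt2, hveq⟩ := List.getElem?_eq_some_iff.mp hsome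
          have : e i - 1 = eVec C' σ i - 1 := ((hN' i).getElem_inj_iff).mp hveq
          simp only
          omega
      · intro e he
        have hval : ∀ i, e i ≤ (C' i).length := by
          intro i
          rw [hlen i]
          exact le_of_lt (hbound e he i)
        refine ⟨Stmt11Aux.Fface C' e, ⟨e, he, subset_refl _⟩, ?_⟩
        funext i
        rw [Stmt11Aux.eVec_Fface hN' hP' hval i]
    refine ⟨k * N, Δ', C', hOC', ?_, hIdx⟩
    exact (Stmt11Aux.main_iff hOC').mp ⟨Stmt11Aux.indexSet_finite, by rw [hIdx]; exact hSideal⟩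
end
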